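/- For all τ in the upper half-plane, θ_2(τ)^4 + θ_4(τ)^4 = θ_3(τ)^4, where θ_2(τ) = Σ_{n∈Z} q^{(n+1/2)^2/2}, θ_3(τ) = Σ_{n∈Z} q^{n^2/2}, θ_4(τ) = Σ_{n∈Z} (−1)^n q^{n^2/2}, with q = exp(2πiτ). -/

import Mathlib

open Complex

/-- The Jacobi theta function `θ₂(τ) = Σ_{n ∈ ℤ} q^{(n+1/2)²/2}`, with `q = exp(2πiτ)`. -/
noncomputable def theta2 (τ : ℂ) : ℂ :=
  ∑' n : ℤ, Complex.exp (Real.pi * Complex.I * τ * ((n : ℂ) + 1 / 2) ^ 2)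

/-- The Jacobi theta function `θ₃(τ) = Σ_{n ∈ ℤ} q^{n²/2}`, with `q = exp(2πiτ)`. -/
noncomputable def theta3 (τ : ℂ) : ℂ :=
  ∑' n : ℤ, Complex.exp (Real.pi * Complex.I * τ * (n : ℂ) ^ 2)

/-- The Jacobi theta function `θ₄(τ) = Σ_{n ∈ ℤ} (−1)ⁿ q^{n²/2}`, with `q = exp(2πiτ)`. -/
noncomputable def theta4 (τ : ℂ) : ℂ :=
  ∑' n : ℤ, (-1 : ℂ) ^ n * Complex.exp (Real.pi * Complex.I * τ * (n : ℂ) ^ 2)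

noncomputable section JacobiAux

namespace JacobiAux

abbrev I4 := (ℤ × ℤ) × ℤ × ℤ

def csum (p : I4) : ℤ := p.1.1 + p.1.2 + p.2.1 + p.2.2

def jodd (x : I4) : I4 :=
  ((x.1.1, x.1.2), (x.2.1, 2 * x.2.2 + 1 - x.1.1 - x.1.2 - x.2.1))

def F3 (τ : ℂ) (p : I4) : ℂ :=
  Complex.exp (Real.pi * Complex.I * τ *
    ((p.1.1 : ℂ) ^ 2 + (p.1.2 : ℂ) ^ 2 + (p.2.1 : ℂ) ^ 2 + (p.2.2 : ℂ) ^ 2))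

def F2 (τ : ℂ) (p : I4) : ℂ :=
  Complex.exp (Real.pi * Complex.I * τ *
    (((p.1.1 : ℂ) + 1 / 2) ^ 2 + ((p.1.2 : ℂ) + 1 / 2) ^ 2 + ((p.2.1 : ℂ) + 1 / 2) ^ 2
      + ((p.2.2 : ℂ) + 1 / 2) ^ 2))

def SO (τ : ℂ) : ℂ := ∑' p : I4, F3 τ (jodd p)

lemma jodd_injective : Function.Injective jodd := by
  rintro ⟨⟨a, b⟩, c, k⟩ ⟨⟨a', b'⟩, c', k'⟩ h
  simp only [jodd, Prod.mk.injEq] at h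
  obtain ⟨⟨h1, h2⟩, h3, h4⟩ := h
  subst h1 h2 h3
  simp only [Prod.mk.injEq, true_and, and_true]
  omega

lemma csum_jodd (x : I4) : csum (jodd x) = 2 * x.2.2 + 1 := by
  rcases x with ⟨⟨a, b⟩, c, k⟩
  simp [csum, jodd]

def evenEquiv : I4 ≃ {p : I4 | Even (csum p)} where
  toFun x := ⟨((x.1.1, x.1.2), (x.2.1, 2 * x.2.2 - x.1.1 - x.1.2 - x.2.1)),
    ⟨x.2.2, by rcases x with ⟨⟨a, b⟩, c, k⟩; simp [csum]; ring⟩⟩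
  invFun y := ((y.1.1.1, y.1.1.2), (y.1.2.1, (y.1.1.1 + y.1.1.2 + y.1.2.1 + y.1.2.2) / 2))
  left_inv := by rintro ⟨⟨a, b⟩, c, k⟩; simp only [Prod.mk.injEq, true_and, and_true]; omega
  right_inv := by
    rintro ⟨⟨⟨a, b⟩, c, d⟩, h⟩
    simp only [Set.mem_setOf_eq, csum, Int.even_iff] at h
    apply Subtype.ext
    simp only [Prod.mk.injEq, true_and, and_true]
    omega

def oddEquiv : I4 ≃ ↥({p : I4 | Even (csum p)}ᶜ) where
  toFun x := ⟨jodd x, by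
    simp only [Set.mem_compl_iff, Set.mem_setOf_eq, csum_jodd, Int.even_iff]
    omega⟩
  invFun y := ((y.1.1.1, y.1.1.2), (y.1.2.1, (y.1.1.1 + y.1.1.2 + y.1.2.1 + y.1.2.2 - 1) / 2))
  left_inv := by rintro ⟨⟨a, b⟩, c, k⟩; simp only [jodd, Prod.mk.injEq, true_and, and_true]; omega
  right_inv := by
    rintro ⟨⟨⟨a, b⟩, c, d⟩, h⟩
    simp only [Set.mem_compl_iff, Set.mem_setOf_eq, csum, Int.even_iff] at h
    apply Subtype.ext
    simp only [jodd, Prod.mk.injEq, true_and, and_true]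
    omega

def negEquiv : I4 ≃ I4 where
  toFun x := ((-1 - x.1.1, x.1.2), (x.2.1, x.2.2 - x.1.1))
  invFun x := ((-1 - x.1.1, x.1.2), (x.2.1, x.2.2 - 1 - x.1.1))
  left_inv := by rintro ⟨⟨a, b⟩, c, k⟩; simp only [Prod.mk.injEq, true_and, and_true]; omega
  right_inv := by rintro ⟨⟨a, b⟩, c, k⟩; simp only [Prod.mk.injEq, true_and, and_true]; omega

def mEquiv : I4 ≃ I4 where
  toFun p := ((p.2.2 + 1, p.1.1 + p.1.2 - p.2.2), (p.1.1 + p.2.1 - p.2.2, p.1.1))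
  invFun q := ((q.2.2, q.1.2 + q.1.1 - 1 - q.2.2), (q.2.1 + q.1.1 - 1 - q.2.2, q.1.1 - 1))
  left_inv := by rintro ⟨⟨a, b⟩, c, k⟩; simp only [Prod.mk.injEq, true_and, and_true]; omega
  right_inv := by rintro ⟨⟨a, b⟩, c, k⟩; simp only [Prod.mk.injEq, true_and, and_true]; omega

/-- `θ₃⁴ - θ₄⁴ = 2 SO` at the level of the expanded sums. -/
lemma diff_eq (h3 : Summable (F3 τ)) (h4 : Summable fun p : I4 => (-1 : ℂ) ^ csum p * F3 τ p) :
    (∑' p : I4, F3 τ p) - (∑' p : I4, (-1 : ℂ) ^ csum p * F3 τ p) = 2 * SO τ := by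
  rw [← Summable.tsum_sub h3 h4]
  have hsupp : (Function.support fun p : I4 => F3 τ p - (-1 : ℂ) ^ csum p * F3 τ p)
      ⊆ Set.range jodd := by
    rintro ⟨⟨a, b⟩, c, d⟩ hp
    rcases Int.even_or_odd (a + b + c + d) with he | ho
    · exfalso
      apply hp
      have h1 : (-1 : ℂ) ^ csum ((a, b), (c, d)) = 1 :=
        Even.neg_one_zpow (by simpa [csum] using he)
      simp [h1]
    · obtain ⟨k, hk⟩ := ho
      refine ⟨((a, b), (c, k)), ?_⟩
      simp only [jodd, Prod.mk.injEq, true_and, and_true]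
      omega
  rw [← jodd_injective.tsum_eq hsupp]
  have : ∀ x : I4, F3 τ (jodd x) - (-1 : ℂ) ^ csum (jodd x) * F3 τ (jodd x)
      = 2 * F3 τ (jodd x) := by
    intro x
    have hodd : Odd (csum (jodd x)) := by rw [csum_jodd]; exact ⟨x.2.2, by ring⟩
    rw [hodd.neg_one_zpow]
    ring
  rw [tsum_congr this, tsum_mul_left, SO]

/-- `θ₂⁴ = 2 SO` at the level of the expanded sums. -/
lemma theta2_eq (h2 : Summable (F2 τ)) : (∑' p : I4, F2 τ p) = 2 * SO τ := by
  classical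
  set s : Set I4 := {p : I4 | Even (csum p)} with hs
  have hsplit := Summable.tsum_subtype_add_tsum_subtype_compl h2 s
  have hAE : (∑' x : s, F2 τ x) = SO τ := by
    rw [← evenEquiv.tsum_eq]
    rw [SO, ← mEquiv.tsum_eq (fun p : I4 => F3 τ (jodd p))]
    refine tsum_congr fun x => ?_
    rcases x with ⟨⟨a, b⟩, c, k⟩
    show F2 τ ((a, b), (c, 2 * k - a - b - c)) = F3 τ (jodd ((k + 1, a + b - k), (a + c - k, a)))
    rw [F2, F3, jodd]
    congr 1
    push_cast
    ring
  have hAO : (∑' x : ↥(sᶜ), F2 τ x) = SO τ := by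
    rw [← oddEquiv.tsum_eq]
    rw [SO, ← mEquiv.tsum_eq (fun p : I4 => F3 τ (jodd p)), ← negEquiv.tsum_eq
      (fun p : I4 => F3 τ (jodd (mEquiv p)))]
    refine tsum_congr fun x => ?_
    rcases x with ⟨⟨a, b⟩, c, k⟩
    simp only [oddEquiv, negEquiv, mEquiv, Equiv.coe_fn_mk, jodd, F2, F3]
    congr 1
    push_cast
    ring
  rw [← hsplit, hAE, hAO]
  ring


variable {τ : ℂ}

lemma summable_norm_theta3 (hτ : 0 < τ.im) :
    Summable fun n : ℤ => ‖Complex.exp (Real.pi * Complex.I * τ * (n : ℂ) ^ 2)‖ := by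
  rw [summable_norm_iff]
  have h := (summable_jacobiTheta₂_term_iff 0 τ).mpr hτ
  refine h.congr fun n => ?_
  rw [jacobiTheta₂_term]
  congr 1
  ring

lemma summable_norm_theta2 (hτ : 0 < τ.im) :
    Summable fun n : ℤ => ‖Complex.exp (Real.pi * Complex.I * τ * ((n : ℂ) + 1 / 2) ^ 2)‖ := by
  have h := (summable_jacobiTheta₂_term_iff (τ / 2) τ).mpr hτ
  rw [← summable_norm_iff] at h
  have := h.mul_left ‖Complex.exp (Real.pi * Complex.I * τ * (1 / 4 : ℂ))‖
  refine this.congr fun n => ?_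
  rw [← norm_mul, jacobiTheta₂_term, ← Complex.exp_add]
  congr 2
  ring

lemma summable_norm_theta4 (hτ : 0 < τ.im) :
    Summable fun n : ℤ =>
      ‖(-1 : ℂ) ^ n * Complex.exp (Real.pi * Complex.I * τ * (n : ℂ) ^ 2)‖ := by
  refine (summable_norm_theta3 hτ).congr fun n => ?_
  rw [norm_mul, norm_zpow, norm_neg, norm_one, one_zpow, one_mul]

lemma tsum_pow_four {f : ℤ → ℂ} (hf : Summable fun n => ‖f n‖) :
    (∑' n : ℤ, f n) ^ 4
      = ∑' p : I4, f p.1.1 * f p.1.2 * (f p.2.1 * f p.2.2) := by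
  have h2 : (∑' n : ℤ, f n) ^ 2 = ∑' p : ℤ × ℤ, f p.1 * f p.2 := by
    rw [sq]; exact tsum_mul_tsum_of_summable_norm hf hf
  have hn2 : Summable fun p : ℤ × ℤ => ‖f p.1 * f p.2‖ := hf.mul_norm hf
  calc (∑' n : ℤ, f n) ^ 4 = ((∑' n : ℤ, f n) ^ 2) ^ 2 := by ring
    _ = ∑' q : I4, (f q.1.1 * f q.1.2) * (f q.2.1 * f q.2.2) := by
        rw [h2, sq]; exact tsum_mul_tsum_of_summable_norm hn2 hn2

lemma summable_pow_four {f : ℤ → ℂ} (hf : Summable fun n => ‖f n‖) :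
    Summable fun p : I4 => f p.1.1 * f p.1.2 * (f p.2.1 * f p.2.2) :=
  ((hf.mul_norm hf).mul_norm (hf.mul_norm hf)).of_norm

lemma theta3_pow (hτ : 0 < τ.im) :
    (∑' n : ℤ, Complex.exp (Real.pi * Complex.I * τ * (n : ℂ) ^ 2)) ^ 4
      = ∑' p : I4, F3 τ p := by
  rw [tsum_pow_four (summable_norm_theta3 hτ)]
  refine tsum_congr fun p => ?_
  rw [F3, ← Complex.exp_add, ← Complex.exp_add, ← Complex.exp_add]
  congr 1
  ring

lemma summable_F3 (hτ : 0 < τ.im) : Summable (F3 τ) := by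
  refine (summable_pow_four (summable_norm_theta3 hτ)).congr fun p => ?_
  rw [F3, ← Complex.exp_add, ← Complex.exp_add, ← Complex.exp_add]
  congr 1
  ring

lemma theta2_pow (hτ : 0 < τ.im) :
    (∑' n : ℤ, Complex.exp (Real.pi * Complex.I * τ * ((n : ℂ) + 1 / 2) ^ 2)) ^ 4
      = ∑' p : I4, F2 τ p := by
  rw [tsum_pow_four (summable_norm_theta2 hτ)]
  refine tsum_congr fun p => ?_
  rw [F2, ← Complex.exp_add, ← Complex.exp_add, ← Complex.exp_add]
  congr 1
  ring

lemma summable_F2 (hτ : 0 < τ.im) : Summable (F2 τ) := by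
  refine (summable_pow_four (summable_norm_theta2 hτ)).congr fun p => ?_
  rw [F2, ← Complex.exp_add, ← Complex.exp_add, ← Complex.exp_add]
  congr 1
  ring

lemma term4_eq (a b c d : ℤ) :
    ((-1 : ℂ) ^ a * Complex.exp (Real.pi * Complex.I * τ * (a : ℂ) ^ 2))
      * ((-1 : ℂ) ^ b * Complex.exp (Real.pi * Complex.I * τ * (b : ℂ) ^ 2))
      * (((-1 : ℂ) ^ c * Complex.exp (Real.pi * Complex.I * τ * (c : ℂ) ^ 2))
        * ((-1 : ℂ) ^ d * Complex.exp (Real.pi * Complex.I * τ * (d : ℂ) ^ 2)))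
      = (-1 : ℂ) ^ (a + b + c + d) * F3 τ ((a, b), (c, d)) := by
  have hne : (-1 : ℂ) ≠ 0 := by norm_num
  rw [zpow_add₀ hne, zpow_add₀ hne, zpow_add₀ hne, F3]
  have : Complex.exp (Real.pi * Complex.I * τ *
      ((a : ℂ) ^ 2 + (b : ℂ) ^ 2 + (c : ℂ) ^ 2 + (d : ℂ) ^ 2))
      = Complex.exp (Real.pi * Complex.I * τ * (a : ℂ) ^ 2)
        * Complex.exp (Real.pi * Complex.I * τ * (b : ℂ) ^ 2)
        * (Complex.exp (Real.pi * Complex.I * τ * (c : ℂ) ^ 2)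
          * Complex.exp (Real.pi * Complex.I * τ * (d : ℂ) ^ 2)) := by
    rw [← Complex.exp_add, ← Complex.exp_add, ← Complex.exp_add]
    congr 1
    ring
  rw [this]
  ring

lemma theta4_pow (hτ : 0 < τ.im) :
    (∑' n : ℤ, (-1 : ℂ) ^ n * Complex.exp (Real.pi * Complex.I * τ * (n : ℂ) ^ 2)) ^ 4
      = ∑' p : I4, (-1 : ℂ) ^ csum p * F3 τ p := by
  rw [tsum_pow_four (summable_norm_theta4 hτ)]
  refine tsum_congr fun p => ?_
  rcases p with ⟨⟨a, b⟩, c, k⟩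
  exact term4_eq a b c k

lemma summable_F4 (hτ : 0 < τ.im) :
    Summable fun p : I4 => (-1 : ℂ) ^ csum p * F3 τ p := by
  refine (summable_pow_four (summable_norm_theta4 hτ)).congr fun p => ?_
  rcases p with ⟨⟨a, b⟩, c, k⟩
  exact term4_eq a b c k


end JacobiAux

end JacobiAux

/-- Jacobi's identity: `θ₂(τ)⁴ + θ₄(τ)⁴ = θ₃(τ)⁴` for all `τ` in the upper half-plane. -/
theorem jacobi_theta_fourth_power_identity (τ : ℂ) (hτ : 0 < τ.im) :
    theta2 τ ^ 4 + theta4 τ ^ 4 = theta3 τ ^ 4 := by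
  have h2 := JacobiAux.theta2_pow hτ
  have h3 := JacobiAux.theta3_pow hτ
  have h4 := JacobiAux.theta4_pow hτ
  have hd := JacobiAux.diff_eq (JacobiAux.summable_F3 hτ) (JacobiAux.summable_F4 hτ)
  have he := JacobiAux.theta2_eq (JacobiAux.summable_F2 hτ)
  simp only [theta2, theta3, theta4]
  rw [h2, h3, h4, he]
  linear_combination - hd
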